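/- For every integer N ≥ 2 and every integer ℓ ≥ 1, the number 2^{ℓ} · p_ℓ^{(N)} is an integer; that is, p_ℓ^{(N)} is a rational number whose denominator is a power of 2 with exponent at most ℓ. -/

import Mathlib

open Complex Finset

private lemma him' (r : ℝ) (z : ℂ) : ((r : ℂ) * z).im = r * z.im := by
  simp [Complex.mul_im]

private lemma lemA' (n : ℕ) (θ : ℝ) :
    Real.sin θ * (2 * Real.cos θ) ^ n =
      ∑ j ∈ range (n + 1), (n.choose j : ℝ) *
        Real.sin (((2 * j - n + 1 : ℤ) : ℝ) * θ) := by
  have key : (Complex.exp (θ * I) * (2 * (Real.cos θ : ℂ)) ^ n).im =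
      Real.sin θ * (2 * Real.cos θ) ^ n := by
    have h : Complex.exp (θ * I) * (2 * (Real.cos θ : ℂ)) ^ n
        = (((2 * Real.cos θ) ^ n : ℝ) : ℂ) * Complex.exp (θ * I) := by
      push_cast; ring
    rw [h, him', Complex.exp_ofReal_mul_I_im]
    ring
  rw [← key]
  have hsum : Complex.exp (θ * I) * (2 * (Real.cos θ : ℂ)) ^ n =
      ∑ j ∈ range (n + 1), (n.choose j : ℂ) *
        Complex.exp ((((2 * j - n + 1 : ℤ) : ℝ) * θ : ℝ) * I) := by
    have h2 : 2 * (Real.cos θ : ℂ) = Complex.exp (θ * I) + Complex.exp (-(θ * I)) := by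
      rw [Complex.ofReal_cos, Complex.cos]
      ring_nf
    rw [h2, add_pow, Finset.mul_sum]
    refine Finset.sum_congr rfl fun j hj => ?_
    rw [Finset.mem_range, Nat.lt_succ_iff] at hj
    rw [← Complex.exp_nat_mul, ← Complex.exp_nat_mul]
    rw [show Complex.exp (θ * I) * (Complex.exp ((j : ℂ) * (θ * I)) *
        Complex.exp (((n - j : ℕ) : ℂ) * (-(θ * I))) * (n.choose j : ℂ)) =
        (n.choose j : ℂ) * Complex.exp ((j : ℂ) * (θ * I) + ((n - j : ℕ) : ℂ) * (-(θ * I)) + θ * I)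
      by rw [Complex.exp_add, Complex.exp_add]; ring]
    congr 2
    have hc : ((n - j : ℕ) : ℂ) = (n : ℂ) - (j : ℂ) := by
      push_cast [hj]; ring
    rw [hc]
    push_cast
    ring
  rw [hsum, Complex.im_sum]
  refine Finset.sum_congr rfl fun j hj => ?_
  rw [show (n.choose j : ℂ) = ((n.choose j : ℝ) : ℂ) by push_cast; rfl]
  rw [him', Complex.exp_ofReal_mul_I_im]

private lemma lemB' (N : ℕ) (hN : 0 < N) (r : ℤ) :
    ∃ c : ℤ, ∑ k ∈ Finset.range N, (-1 : ℝ) ^ k *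
      Real.sin ((r : ℝ) * ((2 * k + 1) * Real.pi / (2 * N))) = (c : ℝ) * N := by
  have hNR : (N : ℝ) ≠ 0 := Nat.cast_ne_zero.mpr hN.ne'
  have hNC : (N : ℂ) ≠ 0 := Nat.cast_ne_zero.mpr hN.ne'
  set α : ℝ := (r : ℝ) * Real.pi / (2 * N) with hα
  set z : ℂ := Complex.exp ((α : ℝ) * I) with hz
  have hz0 : z ≠ 0 := Complex.exp_ne_zero _
  set w : ℂ := -(z ^ 2) with hw
  have hterm : ∀ k ∈ Finset.range N, (-1 : ℝ) ^ k *
      Real.sin ((r : ℝ) * ((2 * k + 1) * Real.pi / (2 * N))) = (w ^ k * z).im := by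
    intro k _
    have h1 : w ^ k * z = (((-1 : ℝ) ^ k : ℝ) : ℂ) *
        Complex.exp ((((2 * k + 1 : ℕ) : ℝ) * α : ℝ) * I) := by
      rw [hw, neg_pow]
      rw [show (-1 : ℂ) ^ k * (z ^ 2) ^ k * z = (-1 : ℂ) ^ k * z ^ (2 * k + 1) by ring]
      rw [hz, ← Complex.exp_nat_mul]
      congr 1
      · push_cast; rfl
      · push_cast; ring
    rw [h1, him', Complex.exp_ofReal_mul_I_im]
    congr 1
    push_cast [hα]
    ring
  rw [Finset.sum_congr rfl hterm, ← Complex.im_sum, ← Finset.sum_mul]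
  by_cases hcase : w = 1
  · -- z² = -1 case
    have hz2 : z ^ 2 = -1 := by
      have h := hcase; rw [hw] at h; linear_combination -h
    have h1 : Complex.exp (((2 * α + Real.pi : ℝ)) * I) = 1 := by
      rw [show ((2 * α + Real.pi : ℝ) : ℂ) * I = ((α : ℝ) * I) + ((α : ℝ) * I) +
        ((Real.pi : ℝ) * I) by push_cast; ring, Complex.exp_add, Complex.exp_add, ← hz,
        Complex.exp_pi_mul_I]
      rw [show z * z = z ^ 2 by ring, hz2]
      norm_num
    obtain ⟨t, ht⟩ := Complex.exp_eq_one_iff.mp h1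
    have htr : (2 * α + Real.pi : ℝ) = (t : ℝ) * (2 * Real.pi) := by
      rw [show ((t : ℂ)) * (2 * (Real.pi : ℂ) * I) = ((((t : ℝ)) * (2 * Real.pi) : ℝ) : ℂ) * I by
        push_cast; ring] at ht
      exact_mod_cast mul_right_cancel₀ Complex.I_ne_zero ht
    have hαval : α = (t : ℝ) * Real.pi - Real.pi / 2 := by linarith
    have hkey : ((∑ k ∈ Finset.range N, w ^ k) * z).im = -((-1) ^ t * 1) * N := by
      rw [hcase]
      simp only [one_pow, Finset.sum_const, Finset.card_range, nsmul_eq_mul, mul_one]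
      rw [show ((N : ℕ) : ℂ) * z = (((N : ℝ)) : ℂ) * z by norm_num, him', hz,
        Complex.exp_ofReal_mul_I_im, hαval, Real.sin_int_mul_pi_sub, Real.sin_pi_div_two]
      ring
    rcases Int.even_or_odd t with hpt | hpt
    · refine ⟨-1, ?_⟩
      rw [hkey, hpt.neg_one_zpow]
      push_cast; ring
    · refine ⟨1, ?_⟩
      rw [hkey, hpt.neg_one_zpow]
      push_cast; ring
  · rw [geom_sum_eq hcase]
    have hz2N : z ^ (2 * N) = (-1 : ℂ) ^ (r : ℤ) := by
      rw [hz, ← Complex.exp_nat_mul]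
      rw [show ((2 * N : ℕ) : ℂ) * ((α : ℝ) * I) = (r : ℂ) * ((Real.pi : ℂ) * I) by
        push_cast [hα]; field_simp]
      rw [Complex.exp_int_mul, Complex.exp_pi_mul_I]
    have hwN : w ^ N = (-1 : ℂ) ^ ((N : ℤ) + r) := by
      rw [hw, neg_pow, ← pow_mul, hz2N, ← zpow_natCast (-1 : ℂ) N,
        ← zpow_add₀ (by norm_num : (-1 : ℂ) ≠ 0)]
    rcases Int.even_or_odd ((N : ℤ) + r) with hpar | hpar
    · refine ⟨0, ?_⟩
      rw [hwN, hpar.neg_one_zpow]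
      simp
    · have hwN' : w ^ N = -1 := by rw [hwN, hpar.neg_one_zpow]
      have hid : z ^ 2 + 1 = 2 * (Real.cos α : ℂ) * z := by
        rw [hz, Complex.exp_mul_I, ← Complex.ofReal_cos, ← Complex.ofReal_sin]
        have hpyth : (Real.sin α : ℂ) ^ 2 + (Real.cos α : ℂ) ^ 2 = 1 := by
          exact_mod_cast congrArg (Complex.ofReal) (Real.sin_sq_add_cos_sq α)
        linear_combination ((Real.sin α : ℂ)) ^ 2 * Complex.I_sq - hpyth
      have hcos : Real.cos α ≠ 0 := by
        intro h0
        apply hcase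
        rw [hw]
        rw [h0] at hid
        push_cast at hid
        linear_combination -hid
      have hval : (w ^ N - 1) / (w - 1) * z = (((Real.cos α)⁻¹ : ℝ) : ℂ) := by
        have hden : w - 1 = -(2 * (Real.cos α : ℂ) * z) := by
          rw [hw]; linear_combination -hid
        have hcosC : (Real.cos α : ℂ) ≠ 0 := Complex.ofReal_ne_zero.mpr hcos
        rw [hwN', hden]
        push_cast
        have hcosC' : Complex.cos (α : ℂ) ≠ 0 := by rwa [Complex.ofReal_cos] at hcosC
        field_simp
        ring
      refine ⟨0, ?_⟩
      rw [hval]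
      simp

/-- The probability numbers `p_ℓ^{(N)}`:  `p_0^{(N)} = 0` and for `ℓ ≥ 1`,
`p_ℓ^{(N)} = (1/N) ∑_{k=1}^{N} (-1)^{k+1} sin θ_k cos^{ℓ-1} θ_k` with `θ_k = (2k-1)π/(2N)`. -/
noncomputable def probNum (N ℓ : ℕ) : ℝ :=
  if ℓ = 0 then 0 else
    (1 / N) * ∑ k ∈ Finset.range N,
      (-1 : ℝ) ^ k * Real.sin ((2 * k + 1) * Real.pi / (2 * N)) *
        Real.cos ((2 * k + 1) * Real.pi / (2 * N)) ^ (ℓ - 1)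

/-- `2^ℓ p_ℓ^{(N)}` is an integer. -/
theorem two_pow_mul_probNum_isInt (N ℓ : ℕ) (hN : 2 ≤ N) (hℓ : 1 ≤ ℓ) :
    ∃ m : ℤ, (2 : ℝ) ^ ℓ * probNum N ℓ = (m : ℝ) := by
  obtain ⟨n, rfl⟩ : ∃ n, ℓ = n + 1 := ⟨ℓ - 1, (Nat.succ_pred_eq_of_pos hℓ).symm⟩
  have hN0 : 0 < N := lt_of_lt_of_le two_pos hN
  have hNR : (N : ℝ) ≠ 0 := Nat.cast_ne_zero.mpr hN0.ne'
  choose c hc using fun j : ℕ => lemB' N hN0 (2 * j - n + 1)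
  refine ⟨2 * ∑ j ∈ Finset.range (n + 1), (n.choose j : ℤ) * c j, ?_⟩
  rw [probNum, if_neg (Nat.succ_ne_zero n)]
  simp only [Nat.add_sub_cancel]
  have hA : ∀ k : ℕ,
      (-1 : ℝ) ^ k * Real.sin ((2 * k + 1) * Real.pi / (2 * N)) *
        Real.cos ((2 * k + 1) * Real.pi / (2 * N)) ^ n * 2 ^ (n + 1)
      = ∑ j ∈ range (n + 1), (2 * (n.choose j : ℝ)) *
          ((-1 : ℝ) ^ k * Real.sin (((2 * j - n + 1 : ℤ) : ℝ) *
            ((2 * k + 1) * Real.pi / (2 * N)))) := by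
    intro k
    set θ : ℝ := (2 * k + 1) * Real.pi / (2 * N) with hθ
    have h := lemA' n θ
    calc (-1 : ℝ) ^ k * Real.sin θ * Real.cos θ ^ n * 2 ^ (n + 1)
        = 2 * (-1 : ℝ) ^ k * (Real.sin θ * (2 * Real.cos θ) ^ n) := by
          rw [mul_pow]; ring
      _ = 2 * (-1 : ℝ) ^ k * ∑ j ∈ range (n + 1), (n.choose j : ℝ) *
            Real.sin (((2 * j - n + 1 : ℤ) : ℝ) * θ) := by rw [h]
      _ = _ := by
          rw [Finset.mul_sum]
          exact Finset.sum_congr rfl fun j _ => by ring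
  have hS : (∑ k ∈ Finset.range N,
      (-1 : ℝ) ^ k * Real.sin ((2 * k + 1) * Real.pi / (2 * N)) *
        Real.cos ((2 * k + 1) * Real.pi / (2 * N)) ^ n) * 2 ^ (n + 1)
      = (2 * ∑ j ∈ Finset.range (n + 1), (n.choose j : ℝ) * (c j : ℝ)) * N := by
    have hB : ∀ j ∈ range (n + 1), ∑ k ∈ Finset.range N, (2 * (n.choose j : ℝ)) *
          ((-1 : ℝ) ^ k * Real.sin (((2 * j - n + 1 : ℤ) : ℝ) *
            ((2 * k + 1) * Real.pi / (2 * N))))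
        = 2 * ((n.choose j : ℝ) * (c j : ℝ)) * (N : ℝ) := by
      intro j _
      rw [← Finset.mul_sum, hc j]
      ring
    rw [Finset.sum_mul, Finset.sum_congr rfl (fun k _ => hA k), Finset.sum_comm,
      Finset.sum_congr rfl hB, Finset.mul_sum, Finset.sum_mul]
  rw [show (2 : ℝ) ^ (n + 1) * ((1 / N) * (∑ k ∈ Finset.range N,
      (-1 : ℝ) ^ k * Real.sin ((2 * k + 1) * Real.pi / (2 * N)) *
        Real.cos ((2 * k + 1) * Real.pi / (2 * N)) ^ n))
      = (1 / N) * ((∑ k ∈ Finset.range N,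
      (-1 : ℝ) ^ k * Real.sin ((2 * k + 1) * Real.pi / (2 * N)) *
        Real.cos ((2 * k + 1) * Real.pi / (2 * N)) ^ n) * 2 ^ (n + 1)) by ring, hS]
  field_simp
  norm_cast
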